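/- Let X be a real Hilbert space, let m ≥ 2, for each i ∈ {1,…,m} let T_i : X → X be firmly nonexpansive, and let λ_1,…,λ_m ∈ (0,1] with ∑_{i=1}^m λ_i = 1. Set T̄ = ∑_{i=1}^m λ_i T_i. Then the closure of the range of Id − T̄ equals the closure of the Minkowski sum ∑_{i=1}^m λ_i • ran(Id − T_i). -/

import Mathlib

theorem stmt_10 {X : Type*} [NormedAddCommGroup X] [InnerProductSpace ℝ X] [CompleteSpace X]
    (m : ℕ) (hm : 2 ≤ m) (T : Fin m → X → X)
    (hT : ∀ i, ∀ x y : X, ‖T i x - T i y‖ ^ 2 ≤ (inner ℝ (x - y) (T i x - T i y) : ℝ))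
    (lam : Fin m → ℝ) (hlam : ∀ i, lam i ∈ Set.Ioc (0 : ℝ) 1) (hsum : ∑ i, lam i = 1) :
    closure (Set.range (fun x => x - ∑ i, lam i • T i x)) =
      closure {y : X | ∃ s : Fin m → X,
        (∀ i, s i ∈ Set.range (fun x => x - T i x)) ∧ y = ∑ i, lam i • s i} := by
  have hlam0 : ∀ i, (0:ℝ) < lam i := fun i => (hlam i).1
  -- each T i is 1-Lipschitz
  have hTlip : ∀ i (x y : X), ‖T i x - T i y‖ ≤ ‖x - y‖ := by
    intro i x y
    have h1 := hT i x y
    have h2 : (inner ℝ (x-y) (T i x - T i y) : ℝ) ≤ ‖x - y‖ * ‖T i x - T i y‖ :=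
      real_inner_le_norm _ _
    rcases le_or_gt ‖T i x - T i y‖ 0 with h | h
    · exact h.trans (norm_nonneg _)
    · nlinarith
  -- cocoercivity of Id - T i
  have hco : ∀ i (x y : X),
      ‖(x - T i x) - (y - T i y)‖ ^ 2
        ≤ (inner ℝ (x - y) ((x - T i x) - (y - T i y)) : ℝ) := by
    intro i x y
    have h1 := hT i x y
    have e1 : (x - T i x) - (y - T i y) = (x - y) - (T i x - T i y) := by abel
    have h2 : (inner ℝ (x - y) ((x - y) - (T i x - T i y)) : ℝ)
        = ‖x - y‖ ^ 2 - inner ℝ (x - y) (T i x - T i y) := by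
      rw [inner_sub_right, real_inner_self_eq_norm_sq]
    have h3 : ‖(x - y) - (T i x - T i y)‖ ^ 2
        = ‖x - y‖ ^ 2 - 2 * inner ℝ (x - y) (T i x - T i y) + ‖T i x - T i y‖ ^ 2 :=
      norm_sub_sq_real _ _
    rw [e1, h3, h2]
    linarith
  have hbar : ∀ x : X, x - ∑ i, lam i • T i x = ∑ i, lam i • (x - T i x) := by
    intro x
    simp only [smul_sub, Finset.sum_sub_distrib, ← Finset.sum_smul, hsum, one_smul]
  apply subset_antisymm
  · apply closure_mono
    rintro _ ⟨x, rfl⟩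
    exact ⟨fun i => x - T i x, fun i => ⟨x, rfl⟩, hbar x⟩
  · refine closure_minimal ?_ isClosed_closure
    rintro _ ⟨s, hs, rfl⟩
    choose z hz using hs
    have hs' : ∀ i, s i = z i - T i (z i) := fun i => (hz i).symm
    set w : X := ∑ i, lam i • s i with hw
    rw [Metric.mem_closure_iff]
    intro δ hδ
    set C : ℝ := ∑ i, lam i * (‖z i‖ ^ 2 / 4) with hC
    have hC0 : 0 ≤ C := Finset.sum_nonneg fun i _ => mul_nonneg (hlam0 i).le (by positivity)
    set ε : ℝ := δ ^ 2 / (2 * (C + 1)) with hε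
    have hε0 : 0 < ε := by positivity
    have hone : (0:ℝ) < 1 + ε := by linarith
    -- the averaged operator S x = ∑ λ i • T i x is 1-Lipschitz
    have hSlip : ∀ x y : X, ‖(∑ i, lam i • T i x) - ∑ i, lam i • T i y‖ ≤ ‖x - y‖ := by
      intro x y
      rw [← Finset.sum_sub_distrib]
      simp_rw [← smul_sub]
      calc ‖∑ i, lam i • (T i x - T i y)‖ ≤ ∑ i, ‖lam i • (T i x - T i y)‖ :=
            norm_sum_le _ _
        _ ≤ ∑ i, lam i * ‖x - y‖ := by
            apply Finset.sum_le_sum; intro i _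
            rw [norm_smul, Real.norm_eq_abs, abs_of_pos (hlam0 i)]
            exact mul_le_mul_of_nonneg_left (hTlip i x y) (hlam0 i).le
        _ = ‖x - y‖ := by rw [← Finset.sum_mul, hsum, one_mul]
    -- contraction G
    set G : X → X := fun x => ((1+ε)⁻¹) • (w + ∑ i, lam i • T i x) with hGdef
    have hKn : (0:ℝ) ≤ (1+ε)⁻¹ := by positivity
    have hK1 : (1+ε)⁻¹ < 1 := by
      rw [inv_lt_one_iff₀]; right; linarith
    have hcontr : ContractingWith ⟨(1+ε)⁻¹, hKn⟩ G := by
      constructor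
      · exact_mod_cast hK1
      · apply LipschitzWith.of_dist_le_mul
        intro x y
        rw [dist_eq_norm, dist_eq_norm]
        have e : G x - G y = ((1+ε)⁻¹) • ((∑ i, lam i • T i x) - ∑ i, lam i • T i y) := by
          simp only [hGdef]; rw [← smul_sub]; congr 1; abel
        rw [e, norm_smul, Real.norm_eq_abs, abs_of_nonneg hKn]
        exact mul_le_mul_of_nonneg_left (hSlip x y) hKn
    have : Nonempty X := ⟨0⟩
    set x : X := ContractingWith.fixedPoint G hcontr with hxdef
    have hx : G x = x := hcontr.fixedPoint_isFixedPt
    -- fixed point equation: (x - S x) - w = -(ε • x)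
    have hw' : w + (∑ i, lam i • T i x) = x + ε • x := by
      have h := congrArg (fun y : X => (1+ε) • y) hx
      simp only [hGdef, smul_inv_smul₀ hone.ne'] at h
      rw [h, add_smul, one_smul]
    have hfix : (x - ∑ i, lam i • T i x) - w = -(ε • x) := by
      have hwe : w = x + ε • x - ∑ i, lam i • T i x := by rw [← hw']; abel
      rw [hwe]; abel
    -- the displacement vectors
    set v : Fin m → X := fun i => (x - T i x) - s i with hv
    have hvsum : ∑ i, lam i • v i = -(ε • x) := by
      rw [← hfix, hbar, hw]
      simp [hv, smul_sub, Finset.sum_sub_distrib]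
    have sum_eq : ∑ i, lam i * (inner ℝ x (v i) : ℝ) = -(ε * ‖x‖ ^ 2) := by
      calc ∑ i, lam i * (inner ℝ x (v i) : ℝ) = (inner ℝ x (∑ i, lam i • v i) : ℝ) := by
            rw [inner_sum]; simp_rw [real_inner_smul_right]
        _ = (inner ℝ x (-(ε • x)) : ℝ) := by rw [hvsum]
        _ = -(ε * ‖x‖ ^ 2) := by
            rw [inner_neg_right, real_inner_smul_right, real_inner_self_eq_norm_sq]
    have per : ∀ i, -(lam i * (‖z i‖ ^ 2 / 4)) ≤ lam i * (inner ℝ x (v i) : ℝ) := by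
      intro i
      have hvi : v i = (x - T i x) - (z i - T i (z i)) := by
        simp only [hv, hs' i]
      have h1 : ‖v i‖ ^ 2 ≤ (inner ℝ (x - z i) (v i) : ℝ) := by
        rw [hvi]; exact hco i x (z i)
      have h2 : (inner ℝ (x - z i) (v i) : ℝ) = inner ℝ x (v i) - inner ℝ (z i) (v i) :=
        inner_sub_left _ _ _
      have h3 : -(‖z i‖ * ‖v i‖) ≤ (inner ℝ (z i) (v i) : ℝ) :=
        (abs_le.mp (abs_real_inner_le_norm _ _)).1
      have h4 : -(‖z i‖ ^ 2 / 4) ≤ (inner ℝ x (v i) : ℝ) := by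
        nlinarith [sq_nonneg (‖v i‖ - ‖z i‖ / 2)]
      calc -(lam i * (‖z i‖ ^ 2 / 4)) = lam i * (-(‖z i‖ ^ 2 / 4)) := by ring
        _ ≤ lam i * inner ℝ x (v i) := mul_le_mul_of_nonneg_left h4 (hlam0 i).le
    have hbound : ε * ‖x‖ ^ 2 ≤ C := by
      have hnegC : -C = ∑ i, -(lam i * (‖z i‖ ^ 2 / 4)) := by
        rw [hC, ← Finset.sum_neg_distrib]
      have hsum2 : -C ≤ ∑ i, lam i * (inner ℝ x (v i) : ℝ) := by
        rw [hnegC]; exact Finset.sum_le_sum fun i _ => per i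
      rw [sum_eq] at hsum2; linarith
    refine ⟨x - ∑ i, lam i • T i x, ⟨x, rfl⟩, ?_⟩
    rw [dist_eq_norm]
    have hwd : w - (x - ∑ i, lam i • T i x) = ε • x := by
      rw [← neg_neg (ε • x), ← hfix]; abel
    rw [hwd, norm_smul, Real.norm_eq_abs, abs_of_pos hε0]
    have hsq : (ε * ‖x‖) ^ 2 ≤ ε * C :=
      calc (ε * ‖x‖) ^ 2 = ε * (ε * ‖x‖ ^ 2) := by ring
        _ ≤ ε * C := mul_le_mul_of_nonneg_left hbound hε0.le
    have hεC : ε * C < δ ^ 2 := by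
      have h2 : ε * (2 * (C + 1)) = δ ^ 2 := by
        rw [hε]; field_simp
      calc ε * C < ε * (2 * (C + 1)) :=
            mul_lt_mul_of_pos_left (by linarith) hε0
        _ = δ ^ 2 := h2
    have := lt_of_pow_lt_pow_left₀ 2 hδ.le (lt_of_le_of_lt hsq hεC)
    exact this
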